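/- In Ãₙ, the natural map from the parabolic subgroup ⟨a₁,…,aₙ⟩ to the quotient Ãₙ/N is an isomorphism onto Ãₙ/N, where N = ⟨pⱼ⁻¹pᵢ⟩; consequently Ãₙ/N ≅ Aₙ (the finite Coxeter group of type A, i.e., the symmetric group S_{n+1}). -/

import Mathlib

open CoxeterMatrix

/-- The affine Coxeter matrix of type Ãₙ on the cyclic index set `ZMod (n+1)`:
`aᵢ² = 1`, `(aᵢa_{i+1})³ = 1`, and non-adjacent generators (mod n+1) commute. -/
def affineA (n : ℕ) : CoxeterMatrix (ZMod (n + 1)) where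
  M := fun i j => if i = j then 1 else if i = j + 1 ∨ j = i + 1 then 3 else 2
  isSymm := by
    ext i j
    by_cases h : i = j
    · simp [Matrix.transpose, h]
    · simp only [Matrix.transpose, Matrix.of_apply]
      rw [if_neg h, if_neg (Ne.symm h)]
      exact if_congr or_comm rfl rfl
  diagonal := fun i => by simp
  off_diagonal := fun i j h => by
    simp only [if_neg h]
    split <;> simp

/-- The Coxeter generators `aᵢ` of `Ãₙ`. -/
def aa (n : ℕ) (i : ZMod (n + 1)) : (affineA n).Group := (affineA n).simple i

/-- The cyclic products `pⱼ = a_{j+1} a_{j+2} ⋯ a_{j-1}` (indices mod `n+1`). -/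
def pp (n : ℕ) (j : ZMod (n + 1)) : (affineA n).Group :=
  ((List.range n).map fun k => aa n (j + 1 + (k : ℕ))).prod

/-- `gⱼ = pⱼ⁻¹ p_{j+1}`. -/
def gg (n : ℕ) (j : ZMod (n + 1)) : (affineA n).Group := (pp n j)⁻¹ * pp n (j + 1)

/-- The subgroup `N = ⟨pⱼ⁻¹pᵢ : i, j⟩` of `Ãₙ`. -/
def NN (n : ℕ) : Subgroup (affineA n).Group :=
  Subgroup.closure {x | ∃ i j : ZMod (n + 1), x = (pp n j)⁻¹ * pp n i}

/-- The standard parabolic subgroup `⟨a₁,…,aₙ⟩` of `Ãₙ` (all generators except `a_{n+1} = a₀`). -/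
def parab (n : ℕ) : Subgroup (affineA n).Group :=
  Subgroup.closure {x | ∃ i : ZMod (n + 1), i ≠ 0 ∧ x = aa n i}

section Aux

variable (n : ℕ)

/-- The canonical Coxeter system on `(affineA n).Group`. -/
noncomputable def acs : CoxeterSystem (affineA n) (affineA n).Group :=
  (affineA n).toCoxeterSystem

theorem acs_simple (i : ZMod (n + 1)) : (acs n).simple i = aa n i := rfl

theorem aa_mul_self (i : ZMod (n + 1)) : aa n i * aa n i = 1 := by
  rw [← acs_simple]; exact (acs n).simple_mul_simple_self i

theorem aa_inv (i : ZMod (n + 1)) : (aa n i)⁻¹ = aa n i := by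
  rw [← acs_simple]; exact (acs n).inv_simple i

theorem aa_pow (i j : ZMod (n + 1)) :
    (aa n i * aa n j) ^ (if i = j then 1 else if i = j + 1 ∨ j = i + 1 then 3 else 2) = 1 := by
  have := (acs n).simple_mul_simple_pow i j
  rw [acs_simple, acs_simple] at this
  exact this

theorem aa_commute {i j : ZMod (n + 1)} (h1 : i ≠ j) (h2 : i ≠ j + 1) (h3 : j ≠ i + 1) :
    Commute (aa n i) (aa n j) := by
  have h := aa_pow n i j
  rw [if_neg h1, if_neg (by tauto), sq] at h
  have h' := eq_inv_of_mul_eq_one_left h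
  rw [mul_inv_rev, aa_inv, aa_inv] at h'
  exact h'

theorem aa_braid (j : ZMod (n + 1)) (hj : (j : ZMod (n + 1)) + 1 ≠ j) :
    aa n (j + 1) * aa n j * aa n (j + 1) = aa n j * aa n (j + 1) * aa n j := by
  have h := aa_pow n (j + 1) j
  rw [if_neg hj, if_pos (Or.inl rfl)] at h
  have hh : aa n (j+1) * aa n j * (aa n (j+1) * aa n j) * (aa n (j+1) * aa n j) = 1 := by
    have := h; rw [pow_succ, pow_succ, pow_one] at this; exact this
  have h2 : aa n (j+1) * aa n j * aa n (j+1) = (aa n j * (aa n (j+1) * aa n j))⁻¹ := by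
    apply eq_inv_of_mul_eq_one_left
    calc aa n (j+1) * aa n j * aa n (j+1) * (aa n j * (aa n (j+1) * aa n j))
        = aa n (j+1) * aa n j * (aa n (j+1) * aa n j) * (aa n (j+1) * aa n j) := by group
      _ = 1 := hh
  rw [h2]
  simp [mul_inv_rev, aa_inv, mul_assoc]

theorem zmod_cast_ne {n i j : ℕ} (hi : i ≤ n) (hj : j ≤ n) (h : i ≠ j) :
    (i : ZMod (n+1)) ≠ (j : ZMod (n+1)) := by
  intro hc
  apply h
  have := congrArg ZMod.val hc
  rwa [ZMod.val_cast_of_lt (by omega), ZMod.val_cast_of_lt (by omega)] at this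

theorem zmod_one_ne_zero {n : ℕ} (hn : 1 ≤ n) : (1 : ZMod (n+1)) ≠ 0 := by
  have := zmod_cast_ne (n := n) (i := 1) (j := 0) (by omega) (by omega) (by omega)
  simpa using this

theorem zmod_two_ne_zero {n : ℕ} (hn : 2 ≤ n) : (2 : ZMod (n+1)) ≠ 0 := by
  have := zmod_cast_ne (n := n) (i := 2) (j := 0) (by omega) (by omega) (by omega)
  simpa using this

theorem swap_cube {α : Type*} [DecidableEq α] {a b c : α} (hab : a ≠ b) (hbc : b ≠ c)
    (hac : a ≠ c) : (Equiv.swap a b * Equiv.swap b c) ^ 3 = 1 := by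
  set σ := Equiv.swap a b * Equiv.swap b c with hσ
  have ha : σ a = b := by
    simp [hσ, Equiv.Perm.mul_apply, Equiv.swap_apply_of_ne_of_ne hab hac]
  have hb : σ b = c := by
    simp [hσ, Equiv.Perm.mul_apply, Equiv.swap_apply_of_ne_of_ne hac.symm hbc.symm]
  have hc : σ c = a := by
    simp [hσ, Equiv.Perm.mul_apply]
  have hoth : ∀ x, x ≠ a → x ≠ b → x ≠ c → σ x = x := by
    intro x h1 h2 h3
    simp [hσ, Equiv.Perm.mul_apply, Equiv.swap_apply_of_ne_of_ne h2 h3,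
      Equiv.swap_apply_of_ne_of_ne h1 h2]
  ext x
  have hit : (σ ^ 3) x = σ (σ (σ x)) := by
    rw [pow_succ, pow_succ, pow_one]; rfl
  rw [hit]
  by_cases h1 : x = a
  · subst h1; rw [ha, hb, hc]; rfl
  by_cases h2 : x = b
  · subst h2; rw [hb, hc, ha]; rfl
  by_cases h3 : x = c
  · subst h3; rw [hc, ha, hb]; rfl
  · rw [hoth x h1 h2 h3, hoth x h1 h2 h3, hoth x h1 h2 h3]; rfl

theorem swap_commute {α : Type*} [DecidableEq α] {a b c d : α} (hac : a ≠ c) (had : a ≠ d)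
    (hbc : b ≠ c) (hbd : b ≠ d) : Commute (Equiv.swap a b) (Equiv.swap c d) := by
  apply Equiv.Perm.Disjoint.commute
  intro x
  by_cases hxa : x = a
  · subst hxa; right; exact Equiv.swap_apply_of_ne_of_ne hac had
  by_cases hxb : x = b
  · subst hxb; right; exact Equiv.swap_apply_of_ne_of_ne hbc hbd
  · left; exact Equiv.swap_apply_of_ne_of_ne hxa hxb

variable (n : ℕ)

theorem pif_liftable (hn : 2 ≤ n) :
    CoxeterMatrix.IsLiftable (affineA n) (fun i : ZMod (n+1) => Equiv.swap i (i+1)) := by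
  have h10 : (1 : ZMod (n+1)) ≠ 0 := zmod_one_ne_zero (by omega)
  have h20 : (2 : ZMod (n+1)) ≠ 0 := zmod_two_ne_zero hn
  have hx1 : ∀ x : ZMod (n+1), x ≠ x + 1 := fun x h => h10 (by
    have : x + 0 = x + 1 := by rw [add_zero]; exact h
    exact ((add_right_injective x this)).symm)
  have hx2 : ∀ x : ZMod (n+1), x ≠ x + 1 + 1 := fun x h => h20 (by
    have : x + 0 = x + (1 + 1) := by rw [add_zero, ← add_assoc]; exact h
    have h2 := ((add_right_injective x this)).symm
    rw [← one_add_one_eq_two]; exact h2)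
  intro i j
  show (Equiv.swap i (i+1) * Equiv.swap j (j+1)) ^
    (if i = j then 1 else if i = j + 1 ∨ j = i + 1 then 3 else 2) = 1
  by_cases hij : i = j
  · subst hij
    simp [Equiv.swap_mul_self]
  rw [if_neg hij]
  by_cases hadj : i = j + 1 ∨ j = i + 1
  · rw [if_pos hadj]
    rcases hadj with h | h
    · subst h
      rw [Equiv.swap_comm j (j+1), Equiv.swap_comm (j+1) (j+1+1)]
      exact swap_cube (Ne.symm (hx1 (j+1))) (Ne.symm (hx1 j)) (Ne.symm (hx2 j))
    · subst h
      exact swap_cube (hx1 i) (hx1 (i+1)) (hx2 i)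
  · rw [if_neg hadj]
    push_neg at hadj
    have hcomm : Commute (Equiv.swap i (i+1)) (Equiv.swap j (j+1)) := by
      apply swap_commute hij hadj.1 (fun h => hadj.2 h.symm)
      intro h
      exact hij (add_right_cancel h)
    rw [hcomm.mul_pow, sq, sq, Equiv.swap_mul_self, Equiv.swap_mul_self, one_mul]

noncomputable def pihom (hn : 2 ≤ n) : (affineA n).Group →* Equiv.Perm (ZMod (n+1)) :=
  (acs n).lift ⟨fun i : ZMod (n+1) => Equiv.swap i (i+1), pif_liftable n hn⟩

theorem pihom_aa (hn : 2 ≤ n) (i : ZMod (n+1)) :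
    pihom n hn (aa n i) = Equiv.swap i (i+1) := by
  rw [← acs_simple]
  exact (acs n).lift_apply_simple (pif_liftable n hn) i

/-- Partial products of adjacent swaps. -/
noncomputable def sprod (j : ZMod (n+1)) (m : ℕ) : Equiv.Perm (ZMod (n+1)) :=
  ((List.range m).map fun k => Equiv.swap (j+1+(k:ℕ)) (j+1+(k:ℕ)+1)).prod

theorem sprod_succ (j : ZMod (n+1)) (m : ℕ) :
    sprod n j (m+1) = sprod n j m * Equiv.swap (j+1+(m:ℕ)) (j+1+(m:ℕ)+1) := by
  unfold sprod
  rw [List.range_succ, List.map_append, List.prod_append, List.map_singleton,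
    List.prod_singleton]

theorem pihom_pp (hn : 2 ≤ n) (j : ZMod (n+1)) :
    pihom n hn (pp n j) = sprod n j n := by
  unfold pp sprod
  rw [map_list_prod, List.map_map]
  congr 1

theorem zmod_add_cancel {j : ZMod (n+1)} {s t : ℕ} (hs : s ≤ n) (ht : t ≤ n)
    (hst : s ≠ t) : j + 1 + (s:ℕ) ≠ j + 1 + (t:ℕ) := by
  intro h
  exact zmod_cast_ne hs ht hst (add_left_cancel h)

theorem sprod_eval (j : ZMod (n+1)) : ∀ m, m ≤ n →
    (sprod n j m (j+1+(m:ℕ)) = j+1) ∧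
    (∀ t : ℕ, t < m → sprod n j m (j+1+(t:ℕ)) = j+1+((t+1:ℕ):ZMod (n+1))) ∧
    (∀ t : ℕ, m < t → t ≤ n → sprod n j m (j+1+(t:ℕ)) = j+1+(t:ℕ)) := by
  intro m
  induction m with
  | zero =>
    intro _
    refine ⟨by simp [sprod], fun t ht => absurd ht (by omega), fun t _ _ => by simp [sprod]⟩
  | succ m ih =>
    intro hm
    obtain ⟨ih1, ih2, ih3⟩ := ih (by omega)
    have hcast : (((m:ℕ)+1 : ℕ) : ZMod (n+1)) = (m:ℕ) + 1 := by push_cast; ring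
    constructor
    · -- (a)
      rw [sprod_succ, Equiv.Perm.mul_apply]
      have harg : j + 1 + (((m:ℕ)+1:ℕ) : ZMod (n+1)) = j + 1 + (m:ℕ) + 1 := by
        push_cast; ring
      rw [harg, Equiv.swap_apply_right]
      exact ih1
    constructor
    · -- (b)
      intro t ht
      rw [sprod_succ, Equiv.Perm.mul_apply]
      by_cases htm : t = m
      · subst htm
        rw [Equiv.swap_apply_left]
        have harg : j + 1 + (t:ℕ) + 1 = j + 1 + (((t+1:ℕ)) : ZMod (n+1)) := by
          push_cast; ring
        rw [harg]
        exact ih3 (t+1) (by omega) (by omega)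
      · have h1 : j + 1 + (t:ℕ) ≠ j + 1 + (m:ℕ) :=
          zmod_add_cancel n (by omega) (by omega) htm
        have h2 : j + 1 + (t:ℕ) ≠ j + 1 + (m:ℕ) + 1 := by
          have harg : j + 1 + ((m:ℕ) : ZMod (n+1)) + 1
              = j + 1 + (((m+1:ℕ)) : ZMod (n+1)) := by push_cast; ring
          rw [harg]
          exact zmod_add_cancel n (by omega) (by omega) (by omega)
        rw [Equiv.swap_apply_of_ne_of_ne h1 h2]
        exact ih2 t (by omega)
    · -- (c)
      intro t ht htn
      rw [sprod_succ, Equiv.Perm.mul_apply]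
      have h1 : j + 1 + (t:ℕ) ≠ j + 1 + (m:ℕ) :=
        zmod_add_cancel n (by omega) (by omega) (by omega)
      have h2 : j + 1 + (t:ℕ) ≠ j + 1 + (m:ℕ) + 1 := by
        have harg : j + 1 + ((m:ℕ) : ZMod (n+1)) + 1
            = j + 1 + (((m+1:ℕ)) : ZMod (n+1)) := by push_cast; ring
        rw [harg]
        exact zmod_add_cancel n (by omega) (by omega) (by omega)
      rw [Equiv.swap_apply_of_ne_of_ne h1 h2]
      exact ih3 t (by omega) htn

theorem pihom_pp_eval (hn : 2 ≤ n) (j : ZMod (n+1)) (x : ZMod (n+1)) :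
    pihom n hn (pp n j) x = x + 1 := by
  rw [pihom_pp n hn]
  obtain ⟨h1, h2, h3⟩ := sprod_eval n j n le_rfl
  set t := (x - (j+1)).val with htdef
  have htn : t ≤ n := by
    have := ZMod.val_lt (x - (j+1))
    omega
  have hx : x = j + 1 + (t:ℕ) := by
    rw [htdef, ZMod.natCast_val, ZMod.cast_id]
    ring
  by_cases ht : t = n
  · rw [hx, ht, h1]
    have h0 : ((n:ℕ) : ZMod (n+1)) + 1 = 0 := by
      have hns : (((n+1:ℕ)) : ZMod (n+1)) = 0 := ZMod.natCast_self (n+1)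
      push_cast at hns
      linear_combination hns
    rw [add_assoc, h0, add_zero]
  · rw [hx, h2 t (by omega)]
    push_cast
    ring

theorem NN_le_ker (hn : 2 ≤ n) : NN n ≤ (pihom n hn).ker := by
  rw [NN, Subgroup.closure_le]
  rintro x ⟨i, j, rfl⟩
  have hij : pihom n hn (pp n i) = pihom n hn (pp n j) := by
    ext y
    rw [pihom_pp_eval n hn, pihom_pp_eval n hn]
  simp [MonoidHom.mem_ker, map_mul, map_inv, hij]

def SQ (m : ℕ) : Set (affineA n).Group :=
  {x | ∃ i : ℕ, 1 ≤ i ∧ i ≤ m ∧ x = aa n ((i : ℕ) : ZMod (n+1))}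

def Qs (m : ℕ) : Subgroup (affineA n).Group := Subgroup.closure (SQ n m)

def rr (m k : ℕ) : (affineA n).Group :=
  ((List.range k).map fun t => aa n (((m - t : ℕ)) : ZMod (n+1))).prod

theorem rr_zero (m : ℕ) : rr n m 0 = 1 := by simp [rr]

theorem rr_succ (m k : ℕ) : rr n m (k+1) = rr n m k * aa n (((m - k : ℕ)) : ZMod (n+1)) := by
  unfold rr
  rw [List.range_succ, List.map_append, List.prod_append, List.map_singleton,
    List.prod_singleton]

theorem rr_one (m : ℕ) : rr n m 1 = aa n ((m : ℕ) : ZMod (n+1)) := by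
  have h := rr_succ n m 0
  rw [rr_zero, one_mul, Nat.sub_zero] at h
  exact h

theorem rr_split (m u v : ℕ) : rr n m (u+v) = rr n m u * rr n (m-u) v := by
  unfold rr
  rw [List.range_add, List.map_append, List.prod_append, List.map_map]
  congr 1
  apply congrArg List.prod
  apply List.map_congr_left
  intro t _
  simp only [Function.comp_apply]
  have hs : m - (u + t) = m - u - t := by omega
  rw [hs]

theorem zmod_cast_ne' {a b : ℕ} (ha : 1 ≤ a) (han : a ≤ n) (hbn : b ≤ n + 1) (h : a ≠ b) :
    (a : ZMod (n+1)) ≠ (b : ZMod (n+1)) := by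
  by_cases hb : b ≤ n
  · exact zmod_cast_ne han hb h
  · have hbe : b = n + 1 := by omega
    subst hbe
    rw [ZMod.natCast_self]
    have := zmod_cast_ne (n:=n) (i:=a) (j:=0) han (by omega) (by omega)
    simpa using this

theorem comm_rr (j m k : ℕ) (hk : k ≤ m) (hm : m ≤ n) (hj1 : 1 ≤ j) (hjn : j ≤ n)
    (hsep : j + k + 1 ≤ m ∨ m + 2 ≤ j) :
    Commute (aa n ((j : ℕ) : ZMod (n+1))) (rr n m k) := by
  apply Commute.list_prod_right
  intro x hx
  rw [List.mem_map] at hx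
  obtain ⟨t, ht, rfl⟩ := hx
  rw [List.mem_range] at ht
  have hi1 : 1 ≤ m - t := by omega
  have hin : m - t ≤ n := by omega
  apply aa_commute
  · exact zmod_cast_ne hjn hin (by omega)
  · have hcast : ((m - t : ℕ) : ZMod (n+1)) + 1 = ((m - t + 1 : ℕ) : ZMod (n+1)) := by
      push_cast; ring
    rw [hcast]
    exact zmod_cast_ne' n hj1 hjn (by omega) (by omega)
  · have hcast : ((j : ℕ) : ZMod (n+1)) + 1 = ((j + 1 : ℕ) : ZMod (n+1)) := by
      push_cast; ring
    rw [hcast]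
    exact zmod_cast_ne' n hi1 hin (by omega) (by omega)

theorem braid_nat (j : ℕ) (h2 : 2 ≤ j) (hjn : j ≤ n) :
    aa n ((j:ℕ) : ZMod (n+1)) * aa n (((j-1:ℕ)) : ZMod (n+1)) * aa n ((j:ℕ) : ZMod (n+1))
      = aa n (((j-1:ℕ)) : ZMod (n+1)) * aa n ((j:ℕ) : ZMod (n+1))
          * aa n (((j-1:ℕ)) : ZMod (n+1)) := by
  have hb : ((j:ℕ) : ZMod (n+1)) = (((j-1:ℕ)) : ZMod (n+1)) + 1 := by
    have hj : (j:ℕ) = (j-1) + 1 := by omega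
    rw [hj]; push_cast; ring
  have hne : (((j-1:ℕ)) : ZMod (n+1)) + 1 ≠ (((j-1:ℕ)) : ZMod (n+1)) := by
    rw [show (((j-1:ℕ)):ZMod (n+1)) + 1 = ((j-1+1:ℕ) : ZMod (n+1)) from by push_cast; ring]
    exact zmod_cast_ne (by omega) (by omega) (by omega)
  have := aa_braid n (((j-1:ℕ)) : ZMod (n+1)) hne
  rw [hb]
  exact this

theorem key_step (m k j : ℕ) (hk : k ≤ m) (hm : m ≤ n) (hj1 : 1 ≤ j) (hjm : j ≤ m) :
    ∃ k' ≤ m, ∃ h, h ∈ Qs n (m-1) ∧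
      rr n m k * aa n ((j:ℕ) : ZMod (n+1)) = h * rr n m k' := by
  have hjn : j ≤ n := by omega
  rcases Nat.lt_or_ge (j + k + 1) (m + 1) with hc1 | hge1
  · -- j + k + 1 ≤ m : commutes past everything
    refine ⟨k, hk, aa n ((j:ℕ) : ZMod (n+1)), ?_, ?_⟩
    · exact Subgroup.subset_closure ⟨j, hj1, by omega, rfl⟩
    · exact ((comm_rr n j m k hk hm hj1 hjn (Or.inl (by omega))).eq).symm
  rcases Nat.lt_or_ge (j + k) (m + 1) with hc2 | hge2
  · -- j + k = m
    have hjj : (j : ℕ) = m - k := by omega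
    refine ⟨k+1, by omega, 1, one_mem _, ?_⟩
    rw [one_mul, rr_succ, hjj]
  rcases Nat.lt_or_ge (j + k) (m + 2) with hc3 | hge3
  · -- j + k = m + 1 : cancellation
    have hk1 : 1 ≤ k := by omega
    have hke : k = (k-1) + 1 := by omega
    have hjj : (j : ℕ) = m - (k-1) := by omega
    have hrr : rr n m k = rr n m (k-1) * aa n (((m - (k-1) : ℕ)) : ZMod (n+1)) := by
      conv_lhs => rw [hke, rr_succ]
    refine ⟨k-1, by omega, 1, one_mem _, ?_⟩
    rw [one_mul, hrr, mul_assoc, ← hjj, aa_mul_self, mul_one]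
  · -- j + k ≥ m + 2 : braid case
    have hj2 : 2 ≤ j := by omega
    have hvj : k - (m - j) ≤ j := by omega
    set u := m - j with hu
    set v := k - u with hv
    have hv2 : 2 ≤ v := by omega
    have e0 : rr n m k = rr n m u * rr n j v := by
      have hke : k = u + v := by omega
      rw [hke, rr_split]
      congr 2
      omega
    have e1 : rr n j v = aa n ((j:ℕ) : ZMod (n+1)) * rr n (j-1) (v-1) := by
      have hve : v = 1 + (v-1) := by omega
      conv_lhs => rw [hve, rr_split, rr_one]
    have e2 : rr n (j-1) (v-1) = aa n (((j-1:ℕ)) : ZMod (n+1)) * rr n (j-2) (v-2) := by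
      have hve : v - 1 = 1 + (v-2) := by omega
      conv_lhs => rw [hve, rr_split, rr_one]
      congr 2
    set B := rr n (j-2) (v-2) with hB
    have c1 : Commute (aa n ((j:ℕ) : ZMod (n+1))) B :=
      comm_rr n j (j-2) (v-2) (by omega) (by omega) hj1 hjn (Or.inr (by omega))
    have c2 : Commute (aa n (((j-1:ℕ)) : ZMod (n+1))) (rr n m u) :=
      comm_rr n (j-1) m u (by omega) hm (by omega) (by omega) (Or.inl (by omega))
    have br := braid_nat n j hj2 hjn
    have br' : aa n ((j:ℕ) : ZMod (n+1)) * (aa n (((j-1:ℕ)) : ZMod (n+1))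
          * (aa n ((j:ℕ) : ZMod (n+1)) * B))
        = aa n (((j-1:ℕ)) : ZMod (n+1)) * (aa n ((j:ℕ) : ZMod (n+1))
          * (aa n (((j-1:ℕ)) : ZMod (n+1)) * B)) := by
      have hbb := congrArg (fun x => x * B) br
      simp only [mul_assoc] at hbb
      exact hbb
    refine ⟨k, hk, aa n (((j-1:ℕ)) : ZMod (n+1)),
      Subgroup.subset_closure ⟨j-1, by omega, by omega, rfl⟩, ?_⟩
    calc rr n m k * aa n ((j:ℕ) : ZMod (n+1))
        = rr n m u * (aa n ((j:ℕ) : ZMod (n+1)) * (aa n (((j-1:ℕ)) : ZMod (n+1))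
            * (B * aa n ((j:ℕ) : ZMod (n+1))))) := by
          rw [e0, e1, e2]; simp only [mul_assoc]
      _ = rr n m u * (aa n ((j:ℕ) : ZMod (n+1)) * (aa n (((j-1:ℕ)) : ZMod (n+1))
            * (aa n ((j:ℕ) : ZMod (n+1)) * B))) := by rw [← c1.eq]
      _ = rr n m u * (aa n (((j-1:ℕ)) : ZMod (n+1)) * (aa n ((j:ℕ) : ZMod (n+1))
            * (aa n (((j-1:ℕ)) : ZMod (n+1)) * B))) := by rw [br']
      _ = aa n (((j-1:ℕ)) : ZMod (n+1)) * rr n m u * (aa n ((j:ℕ) : ZMod (n+1))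
            * (aa n (((j-1:ℕ)) : ZMod (n+1)) * B)) := by
          rw [← mul_assoc, ← c2.eq, mul_assoc]
      _ = aa n (((j-1:ℕ)) : ZMod (n+1)) * rr n m k := by
          rw [e0, e1, e2]; simp only [mul_assoc]

def UU (m : ℕ) : Set (affineA n).Group :=
  {x | ∃ h ∈ Qs n (m-1), ∃ k ≤ m, x = h * rr n m k}

theorem list_in_UU (m : ℕ) (hm : m ≤ n) :
    ∀ l : List (affineA n).Group, (∀ y ∈ l, y ∈ SQ n m) → l.prod ∈ UU n m := by
  intro l
  induction l using List.reverseRecOn with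
  | nil =>
    intro _
    exact ⟨1, one_mem _, 0, Nat.zero_le m, by rw [List.prod_nil, rr_zero, mul_one]⟩
  | append_singleton l g ih =>
    intro hl
    have hg : g ∈ SQ n m := hl g (by simp)
    obtain ⟨h, hh, k, hk, he⟩ := ih (fun y hy => hl y (by simp [hy]))
    obtain ⟨j, hj1, hjm, rfl⟩ := hg
    obtain ⟨k', hk', h', hh', he'⟩ := key_step n m k j hk hm hj1 hjm
    refine ⟨h * h', mul_mem hh hh', k', hk', ?_⟩
    rw [List.prod_append, List.prod_singleton, he, mul_assoc, he', ← mul_assoc]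

theorem covering (m : ℕ) (hm : m ≤ n) : ∀ w ∈ Qs n m, w ∈ UU n m := by
  intro w hw
  have hw' : w ∈ Submonoid.closure (SQ n m ∪ (SQ n m)⁻¹) := by
    rw [← Subgroup.closure_toSubmonoid]; exact hw
  obtain ⟨l, hl, rfl⟩ := Submonoid.exists_list_of_mem_closure hw'
  apply list_in_UU n m hm
  intro y hy
  rcases hl y hy with h | h
  · exact h
  · rw [Set.mem_inv] at h
    obtain ⟨j, hj1, hjm, hje⟩ := h
    exact ⟨j, hj1, hjm, by rw [← inv_inv y, hje, aa_inv]⟩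

theorem Qs_zero : Qs n 0 = ⊥ := by
  have hSQ : SQ n 0 = ∅ := by
    ext x
    simp only [SQ, Set.mem_setOf_eq, Set.mem_empty_iff_false, iff_false]
    rintro ⟨i, h1, h2, _⟩
    omega
  unfold Qs
  rw [hSQ, Subgroup.closure_empty]

theorem Qs_mono {m m' : ℕ} (h : m ≤ m') : Qs n m ≤ Qs n m' := by
  apply Subgroup.closure_mono
  rintro x ⟨i, h1, h2, rfl⟩
  exact ⟨i, h1, by omega, rfl⟩

theorem rr_mem (m k : ℕ) (hm : m ≤ n) (hk : k ≤ m) : rr n m k ∈ Qs n m := by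
  apply Subgroup.list_prod_mem
  intro x hx
  rw [List.mem_map] at hx
  obtain ⟨t, ht, rfl⟩ := hx
  rw [List.mem_range] at ht
  exact Subgroup.subset_closure ⟨m - t, by omega, by omega, rfl⟩

theorem Qs_card : ∀ m, m ≤ n → Finite (Qs n m) ∧ Nat.card (Qs n m) ≤ (m+1).factorial := by
  intro m
  induction m with
  | zero =>
    intro _
    rw [Qs_zero]
    constructor
    · have : ((⊥ : Subgroup (affineA n).Group) : Set (affineA n).Group) = {1} :=
        Subgroup.coe_bot
      exact (Set.Finite.to_subtype (by rw [this]; exact Set.finite_singleton 1))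
    · rw [Subgroup.card_bot]
      simp [Nat.factorial]
  | succ m ih =>
    intro hm1
    obtain ⟨hfin, hcard⟩ := ih (by omega)
    have hmem : ∀ (h : Qs n m) (k : Fin (m+2)),
        (h : (affineA n).Group) * rr n (m+1) (k : ℕ) ∈ Qs n (m+1) := by
      intro h k
      exact mul_mem (Qs_mono n (by omega) h.2)
        (rr_mem n (m+1) k hm1 (by omega))
    let φ : Qs n m × Fin (m+2) → Qs n (m+1) :=
      fun p => ⟨(p.1 : (affineA n).Group) * rr n (m+1) (p.2 : ℕ), hmem p.1 p.2⟩
    have hsurj : Function.Surjective φ := by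
      rintro ⟨w, hw⟩
      obtain ⟨h, hh, k, hk, he⟩ := covering n (m+1) hm1 w hw
      have hh' : h ∈ Qs n m := by simpa using hh
      exact ⟨⟨⟨h, hh'⟩, ⟨k, by omega⟩⟩, Subtype.ext he.symm⟩
    haveI : Finite (Qs n m) := hfin
    constructor
    · exact Finite.of_surjective φ hsurj
    · calc Nat.card (Qs n (m+1))
          ≤ Nat.card (Qs n m × Fin (m+2)) := Nat.card_le_card_of_surjective φ hsurj
        _ = Nat.card (Qs n m) * (m+2) := by
            rw [Nat.card_prod]
            congr 1
            simp [Nat.card_eq_fintype_card]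
        _ ≤ (m+1).factorial * (m+2) := Nat.mul_le_mul_right _ hcard
        _ = (m+2).factorial := by
            show _ = (m+1+1).factorial
            rw [Nat.factorial_succ (m+1)]
            ring

theorem parab_eq : parab n = Qs n n := by
  unfold parab Qs
  congr 1
  ext x
  constructor
  · rintro ⟨i, hi0, rfl⟩
    refine ⟨i.val, ?_, ?_, ?_⟩
    · have hv : i.val ≠ 0 := fun h => hi0 ((ZMod.val_eq_zero i).mp h)
      omega
    · have := ZMod.val_lt i; omega
    · rw [ZMod.natCast_val, ZMod.cast_id]
  · rintro ⟨i, hi1, hin, rfl⟩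
    refine ⟨(i : ZMod (n+1)), ?_, rfl⟩
    have := zmod_cast_ne (n:=n) (i:=i) (j:=0) hin (by omega) (by omega)
    simpa using this

theorem parab_finite : Finite (parab n) := by
  rw [parab_eq]; exact (Qs_card n n le_rfl).1

theorem parab_card : Nat.card (parab n) ≤ (n+1).factorial := by
  rw [parab_eq]; exact (Qs_card n n le_rfl).2

/-- `permCongr` as a `MulEquiv`. -/
def permME {α β : Type*} (e : α ≃ β) : Equiv.Perm α ≃* Equiv.Perm β :=
  { e.permCongr with
    map_mul' := by
      intro p q
      ext x
      simp [Equiv.permCongr_apply, Equiv.Perm.mul_apply] }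

theorem permME_swap {α β : Type*} [DecidableEq α] [DecidableEq β] (e : α ≃ β) (a b : α) :
    permME e (Equiv.swap a b) = Equiv.swap (e a) (e b) := by
  show (e.symm.trans (Equiv.swap a b)).trans e = _
  exact Equiv.symm_trans_swap_trans a b e

/-- The shift bijection `Fin (n+1) ≃ ZMod (n+1)`, `k ↦ k + 1`. -/
def zme : Fin (n+1) ≃ ZMod (n+1) where
  toFun k := (((k : ℕ) + 1 : ℕ) : ZMod (n+1))
  invFun x := ⟨(x - 1).val, ZMod.val_lt _⟩
  left_inv k := by
    ext
    show ((((k : ℕ) + 1 : ℕ) : ZMod (n+1)) - 1).val = (k : ℕ)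
    have h : ((((k : ℕ) + 1 : ℕ)) : ZMod (n+1)) - 1 = (((k:ℕ) : ℕ) : ZMod (n+1)) := by
      push_cast; ring
    rw [h, ZMod.val_cast_of_lt k.isLt]
  right_inv x := by
    show (((x - 1).val + 1 : ℕ) : ZMod (n+1)) = x
    push_cast
    rw [ZMod.natCast_val, ZMod.cast_id]
    ring

theorem pimap_top (hn : 2 ≤ n) : Subgroup.map (pihom n hn) (parab n) = ⊤ := by
  rw [parab, MonoidHom.map_closure]
  apply top_unique
  have htop : Subgroup.closure (Set.range fun i : Fin n => Equiv.swap i.castSucc i.succ)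
      = (⊤ : Subgroup (Equiv.Perm (Fin (n+1)))) :=
    Subgroup.closure_eq_top_of_mclosure_eq_top (Equiv.Perm.mclosure_swap_castSucc_succ n)
  have h2 : Subgroup.map (permME (zme n)).toMonoidHom
      (Subgroup.closure (Set.range fun i : Fin n => Equiv.swap i.castSucc i.succ)) = ⊤ := by
    rw [htop]
    exact Subgroup.map_top_of_surjective _ (permME (zme n)).surjective
  rw [MonoidHom.map_closure] at h2
  rw [← h2, Subgroup.closure_le]
  rintro x ⟨y, ⟨i, rfl⟩, rfl⟩
  apply Subgroup.subset_closure
  refine ⟨aa n ((((i:ℕ)+1 : ℕ)) : ZMod (n+1)),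
    ⟨((((i:ℕ)+1 : ℕ)) : ZMod (n+1)), ?_, rfl⟩, ?_⟩
  · have := zmod_cast_ne (n := n) (i := (i:ℕ)+1) (j := 0) (by omega) (by omega) (by omega)
    simpa using this
  · show pihom n hn _ = (permME (zme n)).toMonoidHom _
    rw [pihom_aa]
    show _ = permME (zme n) (Equiv.swap i.castSucc i.succ)
    rw [permME_swap]
    have h1 : zme n i.castSucc = ((((i:ℕ)+1 : ℕ)) : ZMod (n+1)) := by
      show (((i.castSucc : ℕ) + 1 : ℕ) : ZMod (n+1)) = _
      norm_num
    have h3 : zme n i.succ = ((((i:ℕ)+1 : ℕ)) : ZMod (n+1)) + 1 := by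
      show (((i.succ : ℕ) + 1 : ℕ) : ZMod (n+1)) = _
      rw [Fin.val_succ]
      push_cast
      ring
    rw [h1, h3]

theorem psi_bij (hn : 2 ≤ n) :
    Function.Bijective ((pihom n hn).comp (parab n).subtype) := by
  haveI : Finite (parab n) := parab_finite n
  have hrange : ((pihom n hn).comp (parab n).subtype).range = ⊤ := by
    rw [MonoidHom.range_comp, Subgroup.range_subtype, pimap_top n hn]
  have hsurj : Function.Surjective ((pihom n hn).comp (parab n).subtype) :=
    MonoidHom.range_eq_top.mp hrange
  apply hsurj.bijective_of_nat_card_le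
  have hcardP : Nat.card (Equiv.Perm (ZMod (n+1))) = (n+1).factorial := by
    rw [Nat.card_eq_fintype_card, Fintype.card_perm, ZMod.card]
  rw [hcardP]
  exact parab_card n

theorem pp_zero_mem : pp n 0 ∈ parab n := by
  apply Subgroup.list_prod_mem
  intro x hx
  rw [List.mem_map] at hx
  obtain ⟨k, hk, rfl⟩ := hx
  rw [List.mem_range] at hk
  apply Subgroup.subset_closure
  refine ⟨(0 : ZMod (n+1)) + 1 + (k : ℕ), ?_, rfl⟩
  have hc : (0 : ZMod (n+1)) + 1 + (k : ℕ) = (((k+1 : ℕ)) : ZMod (n+1)) := by push_cast; ring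
  rw [hc]
  have := zmod_cast_ne (n := n) (i := k+1) (j := 0) (by omega) (by omega) (by omega)
  simpa using this

theorem w1_mem :
    (((List.range (n-1)).map fun k => aa n (((1 + k : ℕ)) : ZMod (n+1))).prod) ∈ parab n := by
  apply Subgroup.list_prod_mem
  intro x hx
  rw [List.mem_map] at hx
  obtain ⟨k, hk, rfl⟩ := hx
  rw [List.mem_range] at hk
  apply Subgroup.subset_closure
  refine ⟨(((1 + k : ℕ)) : ZMod (n+1)), ?_, rfl⟩
  have := zmod_cast_ne (n := n) (i := 1+k) (j := 0) (by omega) (by omega) (by omega)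
  simpa using this

theorem range_map_decomp (m : ℕ) (hm : 1 ≤ m) :
    ((List.range m).map fun k => aa n ((k:ℕ) : ZMod (n+1))).prod
      = aa n 0 * ((List.range (m-1)).map fun k => aa n (((1+k : ℕ)) : ZMod (n+1))).prod := by
  obtain ⟨m', rfl⟩ : ∃ m', m = 1 + m' := ⟨m-1, by omega⟩
  rw [List.range_add, List.map_append, List.prod_append, List.map_map]
  have hr1 : List.range 1 = [0] := rfl
  have hm' : 1 + m' - 1 = m' := by omega
  rw [hr1, hm']
  simp only [List.map_cons, List.map_nil, List.prod_cons, List.prod_nil, Nat.cast_zero, mul_one]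
  rfl

theorem pp_n_decomp (hn : 2 ≤ n) :
    pp n ((n:ℕ) : ZMod (n+1)) = aa n 0 *
      (((List.range (n-1)).map fun k => aa n (((1 + k : ℕ)) : ZMod (n+1))).prod) := by
  unfold pp
  have h0 : ((n:ℕ) : ZMod (n+1)) + 1 = 0 := by
    have hns : (((n+1:ℕ)) : ZMod (n+1)) = 0 := ZMod.natCast_self (n+1)
    push_cast at hns
    linear_combination hns
  have hfun : ∀ k ∈ List.range n, aa n (((n:ℕ):ZMod (n+1)) + 1 + (k:ℕ)) = aa n ((k:ℕ)) := by
    intro k _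
    rw [h0, zero_add]
  rw [List.map_congr_left hfun]
  exact range_map_decomp n n (by omega)

theorem mk_aa_mem_range (hn : 2 ≤ n) (hN : (NN n).Normal) (i : ZMod (n+1)) :
    (QuotientGroup.mk' (NN n)) (aa n i)
      ∈ ((QuotientGroup.mk' (NN n)).comp (parab n).subtype).range := by
  by_cases hi : i = 0
  case neg => exact ⟨⟨aa n i, Subgroup.subset_closure ⟨i, hi, rfl⟩⟩, rfl⟩
  subst hi
  set w1 := ((List.range (n-1)).map fun k => aa n (((1 + k : ℕ)) : ZMod (n+1))).prod with hw1
  have hdec : pp n ((n:ℕ) : ZMod (n+1)) = aa n 0 * w1 := pp_n_decomp n hn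
  have ha0 : aa n 0 = pp n ((n:ℕ) : ZMod (n+1)) * w1⁻¹ := by
    rw [hdec, mul_assoc, mul_inv_cancel, mul_one]
  have hmkpp : (QuotientGroup.mk' (NN n)) (pp n ((n:ℕ):ZMod (n+1)))
      = (QuotientGroup.mk' (NN n)) (pp n 0) := by
    rw [QuotientGroup.mk'_apply, QuotientGroup.mk'_apply, QuotientGroup.eq]
    exact Subgroup.subset_closure ⟨0, ((n:ℕ):ZMod (n+1)), rfl⟩
  refine ⟨⟨pp n 0 * w1⁻¹, mul_mem (pp_zero_mem n) (inv_mem (w1_mem n))⟩, ?_⟩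
  show (QuotientGroup.mk' (NN n)) (pp n 0 * w1⁻¹) = (QuotientGroup.mk' (NN n)) (aa n 0)
  rw [ha0, map_mul, map_mul, hmkpp]

theorem f_range_top (hn : 2 ≤ n) (hN : (NN n).Normal) :
    ((QuotientGroup.mk' (NN n)).comp (parab n).subtype).range = ⊤ := by
  rw [Subgroup.eq_top_iff']
  intro q
  obtain ⟨g, rfl⟩ := QuotientGroup.mk'_surjective (NN n) q
  have hg : g ∈ Subgroup.closure (Set.range (acs n).simple) := by
    rw [(acs n).subgroup_closure_range_simple]; trivial
  refine Subgroup.closure_induction ?_ ?_ ?_ ?_ hg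
  · rintro x ⟨i, rfl⟩
    exact mk_aa_mem_range n hn hN i
  · rw [map_one]; exact one_mem _
  · intro x y _ _ hx hy
    rw [map_mul]; exact mul_mem hx hy
  · intro x _ hx
    rw [map_inv]; exact inv_mem hx

end Aux

/-- In `Ãₙ`, the natural map from the parabolic subgroup `⟨a₁,…,aₙ⟩` to the quotient `Ãₙ/N`
is an isomorphism; consequently `Ãₙ/N ≅ Aₙ ≅ S_{n+1}`. -/
theorem stmt14 (n : ℕ) (hn : 2 ≤ n) (hN : (NN n).Normal) :
    Function.Bijective ((QuotientGroup.mk' (NN n)).comp (parab n).subtype) ∧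
    Nonempty (((affineA n).Group ⧸ NN n) ≃* Equiv.Perm (Fin (n + 1))) := by
  set f := (QuotientGroup.mk' (NN n)).comp (parab n).subtype with hf
  set pb := QuotientGroup.lift (NN n) (pihom n hn) (NN_le_ker n hn) with hpb
  have hpbf : ∀ a : parab n, pb (f a) = (pihom n hn) ((a : (affineA n).Group)) := by
    intro a
    rfl
  have hfsurj : Function.Surjective f := by
    rw [← MonoidHom.range_eq_top, hf]
    exact f_range_top n hn hN
  have hfinj : Function.Injective f := by
    intro a b hab
    apply (psi_bij n hn).1
    have h := congrArg pb hab
    rw [hpbf, hpbf] at h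
    exact h
  refine ⟨⟨hfinj, hfsurj⟩, ?_⟩
  have hpbsurj : Function.Surjective pb := by
    intro σ
    obtain ⟨a, ha⟩ := (psi_bij n hn).2 σ
    exact ⟨f a, by rw [hpbf]; exact ha⟩
  have hpbinj : Function.Injective pb := by
    intro x y hxy
    obtain ⟨a, rfl⟩ := hfsurj x
    obtain ⟨b, rfl⟩ := hfsurj y
    rw [hpbf, hpbf] at hxy
    exact congrArg f ((psi_bij n hn).1 hxy)
  exact ⟨(MulEquiv.ofBijective pb ⟨hpbinj, hpbsurj⟩).trans (permME (zme n)).symm⟩
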